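/- Let H be a Hilbert space, (bᵗ)_{t∈I} a family of continuous bilinear forms on H such that t ↦ bᵗ is weakly differentiable with derivative ḃᵗ (i.e. ḃᵗ(u,v) = lim_{h→0}(b^{t+h}(u,v)−bᵗ(u,v))/h for all u,v), the family (ḃᵗ) is equicontinuous (|ḃᵗ(u,v)| ≤ C‖u‖‖v‖ uniformly in t), and t ↦ ḃᵗ is weakly continuous. Let t ↦ uᵗ ∈ H be norm-continuous and weakly differentiable with weak derivative u̇ᵗ. Then for each s ∈ I and v ∈ H, d/dt bᵗ(uᵗ,v)|_{t=s} = ḃˢ(uˢ,v) + bˢ(u̇ˢ,v). -/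

import Mathlib

/-- Chain rule for parameter-dependent bilinear forms on a Hilbert space: if `t ↦ bᵗ` is
weakly differentiable with derivative `ḃᵗ`, `(ḃᵗ)` is equicontinuous and weakly continuous
in `t`, and `t ↦ uᵗ` is norm-continuous and weakly differentiable with weak derivative `u̇ᵗ`,
then `d/dt bᵗ(uᵗ,v)|_{t=s} = ḃˢ(uˢ,v) + bˢ(u̇ˢ,v)` for every `s ∈ I` and `v ∈ H`. -/
theorem stmt_7 {H : Type*} [NormedAddCommGroup H] [InnerProductSpace ℝ H] [CompleteSpace H]
    (I : Set ℝ) (hI : IsOpen I)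
    (b bdot : ℝ → H →L[ℝ] H →L[ℝ] ℝ) (u udot : ℝ → H) (C : ℝ)
    (hbderiv : ∀ t ∈ I, ∀ w v : H, HasDerivAt (fun τ => b τ w v) (bdot t w v) t)
    (hequi : ∀ t ∈ I, ∀ w v : H, |bdot t w v| ≤ C * ‖w‖ * ‖v‖)
    (hbdotcont : ∀ w v : H, ContinuousOn (fun t => bdot t w v) I)
    (hucont : ContinuousOn u I)
    (huweak : ∀ t ∈ I, ∀ l : H →L[ℝ] ℝ, HasDerivAt (fun τ => l (u τ)) (l (udot t)) t) :
    ∀ s ∈ I, ∀ v : H,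
      HasDerivAt (fun t => b t (u t) v) (bdot s (u s) v + b s (udot s) v) s := by
  intro s hs v
  obtain ⟨ε, hε, hball⟩ := Metric.isOpen_iff.mp hI s hs
  have hucs : ContinuousAt u s := hucont.continuousAt (hI.mem_nhds hs)
  -- MVT bound on increments of b
  have key : ∀ t ∈ Metric.ball s ε, ∀ w : H,
      |b t w v - b s w v| ≤ C * ‖w‖ * ‖v‖ * |t - s| := by
    intro t ht w
    have := (convex_ball s ε).norm_image_sub_le_of_norm_hasDerivWithin_le
      (f := fun τ => b τ w v) (f' := fun τ => bdot τ w v) (C := C * ‖w‖ * ‖v‖)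
      (fun τ hτ => (hbderiv τ (hball hτ) w v).hasDerivWithinAt)
      (fun τ hτ => by simpa using hequi τ (hball hτ) w v)
      (Metric.mem_ball_self hε) ht
    simpa [Real.norm_eq_abs] using this
  -- the "derivative in t" part
  set g : ℝ → ℝ := fun t => b t (u t) v - b s (u t) v with hg_def
  have hB : Filter.Tendsto (slope (fun τ => b τ (u s) v) s) (nhdsWithin s {s}ᶜ)
      (nhds (bdot s (u s) v)) := hasDerivAt_iff_tendsto_slope.mp (hbderiv s hs (u s) v)
  have hE : Filter.Tendsto
      (fun t => (b t (u t - u s) v - b s (u t - u s) v) / (t - s)) (nhdsWithin s {s}ᶜ)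
      (nhds 0) := by
    apply squeeze_zero_norm'
    · filter_upwards [nhdsWithin_le_nhds (Metric.ball_mem_nhds s hε),
        self_mem_nhdsWithin] with t ht ht'
      have ht' : t ≠ s := ht'
      have h1 := key t ht (u t - u s)
      have hpos : 0 < |t - s| := abs_pos.mpr (sub_ne_zero.mpr ht')
      rw [Real.norm_eq_abs, abs_div, div_le_iff₀ hpos]
      exact h1
    · have : Filter.Tendsto (fun t => C * ‖u t - u s‖ * ‖v‖) (nhds s)
          (nhds (C * ‖u s - u s‖ * ‖v‖)) := by
        exact ((tendsto_const_nhds.mul ((hucs.sub tendsto_const_nhds).norm)).mul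
          tendsto_const_nhds)
      simpa using this.mono_left nhdsWithin_le_nhds
  have hg : HasDerivAt g (bdot s (u s) v) s := by
    rw [hasDerivAt_iff_tendsto_slope]
    have heq : ∀ᶠ t in nhdsWithin s {s}ᶜ, slope (fun τ => b τ (u s) v) s t
        + (b t (u t - u s) v - b s (u t - u s) v) / (t - s) = slope g s t := by
      filter_upwards [self_mem_nhdsWithin] with t ht
      have ht : t ≠ s := ht
      rw [slope_def_field, slope_def_field, ← add_div]
      congr 1
      simp only [g, map_sub, ContinuousLinearMap.sub_apply]
      ring
    have := (hB.add hE).congr' heq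
    simpa using this
  have hh : HasDerivAt (fun τ => b s (u τ) v) (b s (udot s) v) s := by
    have := huweak s hs ((b s).flip v)
    simpa using this
  have := hg.add hh
  have hfun : (fun t => b t (u t) v) = fun t => g t + b s (u t) v := by
    funext t; simp [g]
  rw [hfun]
  exact this
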